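/- Let n=l (so N=2n). The rational-function sum Δ⁰(x|z) := Σ_{k=n}^{N} [∏_{j=1}^{n−1}(z_k − z_j q⁻²) / ∏_{i=n,i≠k}^{N}(z_i − z_k)q⁻¹] · Δ(x₁,…,x_m | z₁,…,z_{n−1},z_k | z_n,…,ẑ_k,…,z_N), where Δ is any polynomial symmetric in its first block of z-arguments and in its second block, has no poles at z_i=z_k: the apparent simple poles at z_i=z_k cancel between the i-th and k-th summands, so Δ⁰ is a polynomial in z₁,…,z_N. -/

import Mathlib

open MvPolynomial Finset
open MvPolynomial Finset

variable {σ : Type*} [DecidableEq σ]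

/-- substitution X a ↦ X b -/
noncomputable def sbst (a b : σ) : MvPolynomial σ ℂ →ₐ[ℂ] MvPolynomial σ ℂ :=
  aeval (fun i => if i = a then X b else X i)

lemma eval_sbst (a b : σ) (f : MvPolynomial σ ℂ) (v : σ → ℂ) :
    eval v (sbst a b f) = eval (Function.update v a (v b)) f := by
  unfold sbst
  induction f using MvPolynomial.induction_on with
  | C c => simp
  | add p r hp hr => simp only [map_add, hp, hr]
  | mul_X p i hp =>
    simp only [map_mul, aeval_X, hp, eval_X]
    congr 1
    by_cases hi : i = a
    · subst hi; simp [Function.update_self]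
    · simp [hi, Function.update_of_ne hi]

lemma sbst_eq_zero (a b : σ) (f : MvPolynomial σ ℂ)
    (h : ∀ v : σ → ℂ, v a = v b → eval v f = 0) : sbst a b f = 0 := by
  apply MvPolynomial.funext
  intro v
  rw [eval_sbst, map_zero]
  apply h
  rw [Function.update_self]
  by_cases hba : b = a
  · subst hba; rw [Function.update_self]
  · rw [Function.update_of_ne hba]

lemma div1 (a b : σ) (f : MvPolynomial σ ℂ)
    (h : ∀ v : σ → ℂ, v a = v b → eval v f = 0) :
    (X a - X b : MvPolynomial σ ℂ) ∣ f := by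
  rw [← Ideal.mem_span_singleton]
  set I := Ideal.span ({(X a - X b : MvPolynomial σ ℂ)} : Set (MvPolynomial σ ℂ)) with hI
  have hmem : (X a - X b : MvPolynomial σ ℂ) ∈ I := Ideal.subset_span rfl
  have key : (Ideal.Quotient.mkₐ ℂ I).comp (sbst a b) = Ideal.Quotient.mkₐ ℂ I := by
    apply MvPolynomial.algHom_ext
    intro i
    by_cases hi : i = a
    · subst hi
      simp only [AlgHom.comp_apply, sbst, aeval_X, if_pos rfl, Ideal.Quotient.mkₐ_eq_mk]
      rw [Ideal.Quotient.eq]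
      have h3 : -(X i - X b : MvPolynomial σ ℂ) ∈ I := Submodule.neg_mem _ hmem
      rwa [neg_sub] at h3
    · simp [sbst, hi]
  have h0 : sbst a b f = 0 := sbst_eq_zero a b f h
  have h2 : Ideal.Quotient.mk I f = 0 := by
    have hthis := congrArg (fun g : MvPolynomial σ ℂ →ₐ[ℂ] _ => g f) key
    simp only [AlgHom.comp_apply, h0, map_zero, Ideal.Quotient.mkₐ_eq_mk] at hthis
    exact hthis.symm
  exact (Ideal.Quotient.eq_zero_iff_mem).1 h2

lemma step (a b c d : σ) (hab : a ≠ b) (h1 : a = c → b ≠ d) (h2 : b = c → a ≠ d)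
    (g : MvPolynomial σ ℂ)
    (h : ∀ v : σ → ℂ, v c = v d → eval v ((X a - X b) * g) = 0) :
    ∀ v : σ → ℂ, v c = v d → eval v g = 0 := by
  have h0 : sbst c d ((X a - X b) * g) = 0 := sbst_eq_zero c d _ h
  rw [map_mul, map_sub] at h0
  have hXa : sbst c d (X a) = X (if a = c then d else a) := by
    by_cases hc : a = c <;> simp [sbst, hc]
  have hXb : sbst c d (X b) = X (if b = c then d else b) := by
    by_cases hc : b = c <;> simp [sbst, hc]
  rw [hXa, hXb] at h0
  have hne : (if a = c then d else a) ≠ (if b = c then d else b) := by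
    by_cases hac : a = c <;> by_cases hbc : b = c <;> simp [hac, hbc]
    · exact absurd (hac.trans hbc.symm) hab
    · intro hcon; exact (h1 hac) hcon.symm
    · intro hcon; exact (h2 hbc) hcon
    · exact hab
  have hX : (X (if a = c then d else a) - X (if b = c then d else b) : MvPolynomial σ ℂ) ≠ 0 :=
    sub_ne_zero_of_ne (fun hcon => hne (MvPolynomial.X_injective hcon))
  have hg0 : sbst c d g = 0 := by
    rcases mul_eq_zero.1 h0 with h' | h'
    · exact absurd h' hX
    · exact h'
  intro v hv
  have hthis := eval_sbst c d g v
  rw [hg0, map_zero] at hthis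
  have hupd : Function.update v c (v d) = v := by
    funext i
    by_cases hi : i = c
    · subst hi; rw [Function.update_self, hv]
    · rw [Function.update_of_ne hi]
  rw [hupd] at hthis
  exact hthis.symm

lemma div_many (s : Finset (σ × σ)) (hne : ∀ p ∈ s, p.1 ≠ p.2)
    (hcr : ∀ p ∈ s, ∀ p' ∈ s, p ≠ p' →
      (p.1 = p'.1 → p.2 ≠ p'.2) ∧ (p.2 = p'.1 → p.1 ≠ p'.2))
    (f : MvPolynomial σ ℂ)
    (hf : ∀ p ∈ s, ∀ v : σ → ℂ, v p.1 = v p.2 → eval v f = 0) :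
    (∏ p ∈ s, (X p.1 - X p.2 : MvPolynomial σ ℂ)) ∣ f := by
  induction s using Finset.induction_on generalizing f with
  | empty => simp only [Finset.prod_empty]; exact one_dvd f
  | @insert p s hp ih =>
    obtain ⟨g, hg⟩ := div1 p.1 p.2 f (hf p (mem_insert_self p s))
    have hgvan : ∀ p' ∈ s, ∀ v : σ → ℂ, v p'.1 = v p'.2 → eval v g = 0 := by
      intro p' hp' v hv
      have hppne : p ≠ p' := fun hcon => hp (hcon ▸ hp')
      obtain ⟨h1, h2⟩ := hcr p (mem_insert_self p s) p' (mem_insert_of_mem hp') hppne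
      refine step p.1 p.2 p'.1 p'.2 (hne p (mem_insert_self p s)) h1 h2 g ?_ v hv
      intro v' hv'
      rw [← hg]
      exact hf p' (mem_insert_of_mem hp') v' hv'
    obtain ⟨g', hg'⟩ := ih (fun p' hp' => hne p' (mem_insert_of_mem hp'))
      (fun p' hp' p'' hp'' hne' => hcr p' (mem_insert_of_mem hp') p'' (mem_insert_of_mem hp'') hne')
      g hgvan
    rw [Finset.prod_insert hp, hg, hg']
    exact ⟨g', by ring⟩

lemma eval_aeval' {τ : Type*} (v : σ → ℂ) (F : τ → MvPolynomial σ ℂ) (P : MvPolynomial τ ℂ) :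
    eval v (aeval F P) = eval (fun s => eval v (F s)) P := by
  induction P using MvPolynomial.induction_on with
  | C c => simp
  | add p r hp hr => simp only [map_add, hp, hr]
  | mul_X p i hp => simp only [map_mul, aeval_X, hp, eval_X]


variable {ι : Type*} [LinearOrder ι] [DecidableEq ι]

/-- ordered pairs from K -/
def pairsF (K : Finset ι) : Finset (ι × ι) := (K ×ˢ K).filter fun p => p.1 < p.2

lemma mem_pairsF {K : Finset ι} {p : ι × ι} :
    p ∈ pairsF K ↔ p.1 ∈ K ∧ p.2 ∈ K ∧ p.1 < p.2 := by
  simp [pairsF, mem_filter, mem_product, and_assoc]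

/-- Vandermonde split off index k -/
lemma vand_split (K : Finset ι) (w : ι → ℂ) (k : ι) (hk : k ∈ K) :
    ∏ p ∈ pairsF K, (w p.1 - w p.2)
      = (-1) ^ ((K.filter (fun i => k < i)).card)
        * (∏ i ∈ K.erase k, (w i - w k))
        * ∏ p ∈ (pairsF K).filter (fun p => p.1 ≠ k ∧ p.2 ≠ k), (w p.1 - w p.2) := by
  classical
  have hsplit := Finset.prod_filter_mul_prod_filter_not (pairsF K)
    (fun p => p.1 ≠ k ∧ p.2 ≠ k) (fun p => w p.1 - w p.2)
  rw [← hsplit]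
  rw [mul_comm]
  congr 1
  -- ∏ over pairs containing k  =  sign * ∏ over erase
  have hbij : ∏ p ∈ (pairsF K).filter (fun p => ¬(p.1 ≠ k ∧ p.2 ≠ k)), (w p.1 - w p.2)
      = ∏ i ∈ K.erase k, (if i < k then (w i - w k) else (w k - w i)) := by
    refine Finset.prod_nbij'
      (fun p => if p.1 = k then p.2 else p.1)
      (fun i => if i < k then (i, k) else (k, i)) ?_ ?_ ?_ ?_ ?_
    · intro p hp
      simp only [mem_filter, mem_pairsF, not_and, not_not] at hp
      obtain ⟨⟨h1, h2, h3⟩, h4⟩ := hp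
      by_cases hpk : p.1 = k
      · simp only [if_pos hpk]
        exact mem_erase.2 ⟨fun hcon => absurd (hpk ▸ hcon ▸ h3) (lt_irrefl _), h2⟩
      · simp only [if_neg hpk]
        have : p.2 = k := h4 hpk
        exact mem_erase.2 ⟨hpk, h1⟩
    · intro i hi
      obtain ⟨hik, hiK⟩ := mem_erase.1 hi
      by_cases hlt : i < k
      · simp only [if_pos hlt, mem_filter, mem_pairsF]
        exact ⟨⟨hiK, hk, hlt⟩, by simp⟩
      · have hklt : k < i := lt_of_le_of_ne (not_lt.1 hlt) (Ne.symm hik)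
        simp only [if_neg hlt, mem_filter, mem_pairsF]
        exact ⟨⟨hk, hiK, hklt⟩, by simp [Ne.symm hik]⟩
    · intro p hp
      simp only [mem_filter, mem_pairsF, not_and, not_not] at hp
      obtain ⟨⟨h1, h2, h3⟩, h4⟩ := hp
      by_cases hpk : p.1 = k
      · simp only [if_pos hpk]
        have : ¬ p.2 < k := by rw [← hpk]; exact not_lt.2 (le_of_lt h3)
        simp only [if_neg this]
        exact Prod.ext hpk.symm rfl
      · have h5 : p.2 = k := h4 hpk
        simp only [if_neg hpk]
        have : p.1 < k := h5 ▸ h3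
        simp only [if_pos this]
        exact Prod.ext rfl h5.symm
    · intro i hi
      obtain ⟨hik, hiK⟩ := mem_erase.1 hi
      by_cases hlt : i < k
      · simp [hlt, ne_of_lt hlt]
      · have hklt : k < i := lt_of_le_of_ne (not_lt.1 hlt) (Ne.symm hik)
        simp [hlt, ne_of_gt hklt]
    · intro p hp
      simp only [mem_filter, mem_pairsF, not_and, not_not] at hp
      obtain ⟨⟨h1, h2, h3⟩, h4⟩ := hp
      by_cases hpk : p.1 = k
      · simp only [if_pos hpk]
        have : ¬ p.2 < k := by rw [← hpk]; exact not_lt.2 (le_of_lt h3)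
        simp only [if_neg this, hpk]
      · have h5 : p.2 = k := h4 hpk
        have : p.1 < k := h5 ▸ h3
        simp only [if_neg hpk, if_pos this, h5]
  rw [hbij]
  have : ∀ i ∈ K.erase k, (if i < k then (w i - w k) else (w k - w i))
      = (if i < k then (1:ℂ) else -1) * (w i - w k) := by
    intro i hi
    by_cases hlt : i < k
    · simp [hlt]
    · simp only [if_neg hlt]; ring
  rw [Finset.prod_congr rfl this, Finset.prod_mul_distrib]
  congr 1
  rw [Finset.prod_ite, Finset.prod_const, Finset.prod_const, one_pow, one_mul]
  congr 1
  congr 1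
  ext i
  simp only [mem_filter, mem_erase]
  constructor
  · rintro ⟨⟨hik, hiK⟩, hnlt⟩
    exact ⟨hiK, lt_of_le_of_ne (not_lt.1 hnlt) (Ne.symm hik)⟩
  · rintro ⟨hiK, hklt⟩
    exact ⟨⟨ne_of_gt hklt, hiK⟩, not_lt.2 (le_of_lt hklt)⟩

lemma card_between (K : Finset ι) (a b : ι) (hb : b ∈ K) (hab : a < b) :
    (K.filter (fun i => a < i)).card
      = (K.filter (fun i => a < i ∧ i < b)).card + 1 + (K.filter (fun i => b < i)).card := by
  classical
  have h1 : K.filter (fun i => a < i)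
      = (K.filter (fun i => a < i ∧ i < b)) ∪ (K.filter (fun i => b ≤ i)) := by
    ext i
    simp only [mem_filter, mem_union]
    constructor
    · rintro ⟨hiK, hai⟩
      rcases lt_or_ge i b with h | h
      · exact Or.inl ⟨hiK, hai, h⟩
      · exact Or.inr ⟨hiK, h⟩
    · rintro (⟨hiK, hai, _⟩ | ⟨hiK, hbi⟩)
      · exact ⟨hiK, hai⟩
      · exact ⟨hiK, lt_of_lt_of_le hab hbi⟩
  have h2 : K.filter (fun i => b ≤ i) = insert b (K.filter (fun i => b < i)) := by
    ext i
    simp only [mem_filter, mem_insert]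
    constructor
    · rintro ⟨hiK, hbi⟩
      rcases eq_or_lt_of_le hbi with h | h
      · exact Or.inl h.symm
      · exact Or.inr ⟨hiK, h⟩
    · rintro (rfl | ⟨hiK, hbi⟩)
      · exact ⟨hb, le_refl _⟩
      · exact ⟨hiK, le_of_lt hbi⟩
  have hdisj : Disjoint (K.filter (fun i => a < i ∧ i < b)) (K.filter (fun i => b ≤ i)) := by
    rw [Finset.disjoint_left]
    intro i hi hi'
    simp only [mem_filter] at hi hi'
    exact absurd (lt_of_lt_of_le hi.2.2 hi'.2) (lt_irrefl i)
  have hb' : b ∉ K.filter (fun i => b < i) := by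
    simp only [mem_filter]; rintro ⟨_, h⟩; exact absurd h (lt_irrefl b)
  rw [h1, Finset.card_union_of_disjoint hdisj, h2, Finset.card_insert_of_notMem hb']
  omega

lemma flip_lemma (K : Finset ι) (w : ι → ℂ) (a b : ι) (ha : a ∈ K) (hb : b ∈ K)
    (hab : a < b) (hw : w a = w b) :
    (-1:ℂ) ^ ((K.filter (fun i => a < i)).card)
        * ∏ p ∈ (pairsF K).filter (fun p => p.1 ≠ a ∧ p.2 ≠ a), (w p.1 - w p.2)
    = - ((-1:ℂ) ^ ((K.filter (fun i => b < i)).card)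
        * ∏ p ∈ (pairsF K).filter (fun p => p.1 ≠ b ∧ p.2 ≠ b), (w p.1 - w p.2)) := by
  classical
  set J : Finset ι := K.filter (fun i => a < i ∧ i < b) with hJdef
  set Ba : Finset (ι × ι) := (pairsF K).filter (fun p => p.1 ≠ a ∧ p.2 ≠ a) with hBa
  set Bb : Finset (ι × ι) := (pairsF K).filter (fun p => p.1 ≠ b ∧ p.2 ≠ b) with hBb
  have hmem_Ba : ∀ p : ι × ι, p ∈ Ba ↔ (p.1 ∈ K ∧ p.2 ∈ K ∧ p.1 < p.2) ∧ p.1 ≠ a ∧ p.2 ≠ a := by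
    intro p; rw [hBa, mem_filter, mem_pairsF]
  have hmem_Bb : ∀ p : ι × ι, p ∈ Bb ↔ (p.1 ∈ K ∧ p.2 ∈ K ∧ p.1 < p.2) ∧ p.1 ≠ b ∧ p.2 ≠ b := by
    intro p; rw [hBb, mem_filter, mem_pairsF]
  have hsa := Finset.prod_filter_mul_prod_filter_not Ba
    (fun p => p.2 = b ∧ a < p.1) (fun p => w p.1 - w p.2)
  have hsb := Finset.prod_filter_mul_prod_filter_not Bb
    (fun p => p.1 = a ∧ p.2 < b) (fun p => w p.1 - w p.2)
  -- FA product
  have hFA : ∏ p ∈ Ba.filter (fun p => p.2 = b ∧ a < p.1), (w p.1 - w p.2)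
      = ∏ i ∈ J, (w i - w b) := by
    refine Finset.prod_nbij' (fun p => p.1) (fun i => (i, b)) ?_ ?_ ?_ ?_ ?_
    · intro p hp
      obtain ⟨hp1, h6, h7⟩ := mem_filter.1 hp
      obtain ⟨⟨h1, h2, h3⟩, _, _⟩ := (hmem_Ba p).1 hp1
      exact mem_filter.2 ⟨h1, h7, h6 ▸ h3⟩
    · intro i hi
      obtain ⟨hiK, hai, hib⟩ := mem_filter.1 hi
      refine mem_filter.2 ⟨(hmem_Ba (i, b)).2 ⟨⟨hiK, hb, hib⟩, ne_of_gt hai, ne_of_gt hab⟩, rfl, hai⟩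
    · intro p hp
      obtain ⟨_, h6, _⟩ := mem_filter.1 hp
      exact Prod.ext rfl h6.symm
    · intro i _
      rfl
    · intro p hp
      obtain ⟨_, h6, _⟩ := mem_filter.1 hp
      rw [h6]
  -- FB product
  have hFB : ∏ p ∈ Bb.filter (fun p => p.1 = a ∧ p.2 < b), (w p.1 - w p.2)
      = ∏ i ∈ J, (w a - w i) := by
    refine Finset.prod_nbij' (fun p => p.2) (fun i => (a, i)) ?_ ?_ ?_ ?_ ?_
    · intro p hp
      obtain ⟨hp1, h6, h7⟩ := mem_filter.1 hp
      obtain ⟨⟨h1, h2, h3⟩, _, _⟩ := (hmem_Bb p).1 hp1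
      exact mem_filter.2 ⟨h2, h6 ▸ h3, h7⟩
    · intro i hi
      obtain ⟨hiK, hai, hib⟩ := mem_filter.1 hi
      refine mem_filter.2 ⟨(hmem_Bb (a, i)).2 ⟨⟨ha, hiK, hai⟩, ne_of_lt hab, ne_of_lt hib⟩, rfl, hib⟩
    · intro p hp
      obtain ⟨_, h6, _⟩ := mem_filter.1 hp
      exact Prod.ext h6.symm rfl
    · intro i _
      rfl
    · intro p hp
      obtain ⟨_, h6, _⟩ := mem_filter.1 hp
      rw [h6]
  -- rest bijection
  have hR : ∏ p ∈ Ba.filter (fun p => ¬(p.2 = b ∧ a < p.1)), (w p.1 - w p.2)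
      = ∏ p ∈ Bb.filter (fun p => ¬(p.1 = a ∧ p.2 < b)), (w p.1 - w p.2) := by
    refine Finset.prod_nbij'
      (fun p => if p.1 = b then (a, p.2) else if p.2 = b then (p.1, a) else p)
      (fun p => if p.1 = a then (b, p.2) else if p.2 = a then (p.1, b) else p)
      ?_ ?_ ?_ ?_ ?_
    · intro p hp
      obtain ⟨hp0, h6⟩ := mem_filter.1 hp
      obtain ⟨⟨h1, h2, h3⟩, h4, h5⟩ := (hmem_Ba p).1 hp0
      by_cases hp1 : p.1 = b
      · rw [if_pos hp1]
        have hp2b : b < p.2 := hp1 ▸ h3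
        refine mem_filter.2 ⟨(hmem_Bb (a, p.2)).2 ⟨⟨ha, h2, lt_trans hab hp2b⟩,
          ne_of_lt hab, ne_of_gt hp2b⟩, ?_⟩
        rintro ⟨-, hcon⟩
        exact absurd hcon (not_lt.2 (le_of_lt hp2b))
      · by_cases hp2 : p.2 = b
        · rw [if_neg hp1, if_pos hp2]
          have hle : p.1 ≤ a := not_lt.1 (fun hcon => h6 ⟨hp2, hcon⟩)
          have hlt : p.1 < a := lt_of_le_of_ne hle h4
          refine mem_filter.2 ⟨(hmem_Bb (p.1, a)).2 ⟨⟨h1, ha, hlt⟩,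
            ne_of_lt (lt_trans hlt hab), ne_of_lt hab⟩, ?_⟩
          rintro ⟨hcon, -⟩
          exact h4 hcon
        · rw [if_neg hp1, if_neg hp2]
          refine mem_filter.2 ⟨(hmem_Bb p).2 ⟨⟨h1, h2, h3⟩, hp1, hp2⟩, ?_⟩
          rintro ⟨hcon, -⟩
          exact h4 hcon
    · intro p hp
      obtain ⟨hp0, h6⟩ := mem_filter.1 hp
      obtain ⟨⟨h1, h2, h3⟩, h4, h5⟩ := (hmem_Bb p).1 hp0
      by_cases hp1 : p.1 = a
      · rw [if_pos hp1]
        have hble : b ≤ p.2 := not_lt.1 (fun hcon => h6 ⟨hp1, hcon⟩)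
        have hblt : b < p.2 := lt_of_le_of_ne hble (Ne.symm h5)
        refine mem_filter.2 ⟨(hmem_Ba (b, p.2)).2 ⟨⟨hb, h2, hblt⟩,
          ne_of_gt hab, ne_of_gt (lt_trans hab hblt)⟩, ?_⟩
        rintro ⟨hcon, -⟩
        exact absurd hcon (ne_of_gt hblt)
      · by_cases hp2 : p.2 = a
        · rw [if_neg hp1, if_pos hp2]
          have hlt : p.1 < a := hp2 ▸ h3
          refine mem_filter.2 ⟨(hmem_Ba (p.1, b)).2 ⟨⟨h1, hb, lt_trans hlt hab⟩,
            hp1, ne_of_gt hab⟩, ?_⟩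
          rintro ⟨-, hcon⟩
          exact absurd hcon (not_lt.2 (le_of_lt hlt))
        · rw [if_neg hp1, if_neg hp2]
          refine mem_filter.2 ⟨(hmem_Ba p).2 ⟨⟨h1, h2, h3⟩, hp1, hp2⟩, ?_⟩
          rintro ⟨hcon, -⟩
          exact h5 hcon
    · intro p hp
      obtain ⟨hp0, h6⟩ := mem_filter.1 hp
      obtain ⟨⟨h1, h2, h3⟩, h4, h5⟩ := (hmem_Ba p).1 hp0
      by_cases hp1 : p.1 = b
      · rw [if_pos hp1]
        dsimp only
        rw [if_pos rfl]
        exact Prod.ext hp1.symm rfl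
      · by_cases hp2 : p.2 = b
        · have hle : p.1 ≤ a := not_lt.1 (fun hcon => h6 ⟨hp2, hcon⟩)
          have hlt : p.1 < a := lt_of_le_of_ne hle h4
          rw [if_neg hp1, if_pos hp2]
          dsimp only
          rw [if_neg h4, if_pos rfl]
          exact Prod.ext rfl hp2.symm
        · rw [if_neg hp1, if_neg hp2, if_neg h4, if_neg h5]
    · intro p hp
      obtain ⟨hp0, h6⟩ := mem_filter.1 hp
      obtain ⟨⟨h1, h2, h3⟩, h4, h5⟩ := (hmem_Bb p).1 hp0
      by_cases hp1 : p.1 = a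
      · rw [if_pos hp1]
        dsimp only
        rw [if_pos rfl]
        exact Prod.ext hp1.symm rfl
      · by_cases hp2 : p.2 = a
        · have hlt : p.1 < a := hp2 ▸ h3
          rw [if_neg hp1, if_pos hp2]
          dsimp only
          rw [if_neg h4, if_pos rfl]
          exact Prod.ext rfl hp2.symm
        · rw [if_neg hp1, if_neg hp2, if_neg h4, if_neg h5]
    · intro p hp
      obtain ⟨hp0, h6⟩ := mem_filter.1 hp
      obtain ⟨⟨h1, h2, h3⟩, h4, h5⟩ := (hmem_Ba p).1 hp0
      by_cases hp1 : p.1 = b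
      · rw [if_pos hp1]
        show w p.1 - w p.2 = w a - w p.2
        rw [hp1, hw]
      · by_cases hp2 : p.2 = b
        · rw [if_neg hp1, if_pos hp2]
          show w p.1 - w p.2 = w p.1 - w a
          rw [hp2, hw]
        · rw [if_neg hp1, if_neg hp2]
  -- finish
  have hJflip : ∏ i ∈ J, (w a - w i) = (-1:ℂ) ^ J.card * ∏ i ∈ J, (w i - w b) := by
    rw [← Finset.prod_const, ← Finset.prod_mul_distrib]
    apply Finset.prod_congr rfl
    intro i _
    rw [hw]; ring
  have hc := card_between K a b hb hab
  rw [← hsa, ← hsb, hFA, hFB, hR, hJflip, hc, ← hJdef]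
  rw [pow_add, pow_add]
  ring


lemma cycle_exists (n N : ℕ) (hn : 0 < n) (hN : N = 2 * n) (z : Fin N → ℂ)
    (a b : Fin N) (hna : n - 1 ≤ (a : ℕ)) (hab : (a : ℕ) < (b : ℕ)) (hz : z a = z b) :
    ∃ s : Equiv.Perm (Fin n),
      ∀ j : Fin n,
        (if h : n - 1 + ((s j : Fin n) : ℕ) < (b : ℕ)
          then z ⟨n - 1 + ((s j : Fin n) : ℕ), by omega⟩
          else z ⟨n + ((s j : Fin n) : ℕ), by omega⟩)
        = (if h : n - 1 + (j : ℕ) < (a : ℕ)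
          then z ⟨n - 1 + (j : ℕ), by omega⟩
          else z ⟨n + (j : ℕ), by omega⟩) := by
  have hb2 : (b : ℕ) < N := b.isLt
  have hnb : n - 1 ≤ (b : ℕ) := by omega
  set p : ℕ := (a : ℕ) - (n - 1) with hp
  set r : ℕ := (b : ℕ) - (n - 1) with hr
  have hpr : p < r := by omega
  have hrn : r ≤ n := by omega
  set sf : Fin n → Fin n := fun j => if h1 : p ≤ (j : ℕ) ∧ (j : ℕ) < r
      then (if h2 : (j : ℕ) + 1 = r then ⟨p, by omega⟩ else ⟨(j : ℕ) + 1, by omega⟩)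
      else j with hsf
  set sg : Fin n → Fin n := fun j => if h1 : p ≤ (j : ℕ) ∧ (j : ℕ) < r
      then (if h2 : (j : ℕ) = p then ⟨r - 1, by omega⟩ else ⟨(j : ℕ) - 1, by omega⟩)
      else j with hsg
  have hleft : ∀ j, sg (sf j) = j := by
    intro j
    by_cases h1 : p ≤ (j : ℕ) ∧ (j : ℕ) < r
    · by_cases h2 : (j : ℕ) + 1 = r
      · rw [hsf]; dsimp only; rw [dif_pos h1, dif_pos h2]
        rw [hsg]; dsimp only
        rw [dif_pos (show p ≤ ((⟨p, by omega⟩ : Fin n) : ℕ) ∧ ((⟨p, by omega⟩ : Fin n) : ℕ) < r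
              by simp only [Fin.val_mk]; omega),
            dif_pos (show ((⟨p, by omega⟩ : Fin n) : ℕ) = p by simp only [Fin.val_mk])]
        exact Fin.ext (by simp only [Fin.val_mk]; omega)
      · rw [hsf]; dsimp only; rw [dif_pos h1, dif_neg h2]
        rw [hsg]; dsimp only
        rw [dif_pos (show p ≤ ((⟨(j : ℕ) + 1, by omega⟩ : Fin n) : ℕ)
              ∧ ((⟨(j : ℕ) + 1, by omega⟩ : Fin n) : ℕ) < r by simp only [Fin.val_mk]; omega),
            dif_neg (show ¬(((⟨(j : ℕ) + 1, by omega⟩ : Fin n) : ℕ) = p)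
              by simp only [Fin.val_mk]; omega)]
        exact Fin.ext (by simp only [Fin.val_mk]; omega)
    · rw [hsf]; dsimp only; rw [dif_neg h1]
      rw [hsg]; dsimp only; rw [dif_neg h1]
  have hright : ∀ j, sf (sg j) = j := by
    intro j
    by_cases h1 : p ≤ (j : ℕ) ∧ (j : ℕ) < r
    · by_cases h2 : (j : ℕ) = p
      · rw [hsg]; dsimp only; rw [dif_pos h1, dif_pos h2]
        rw [hsf]; dsimp only
        rw [dif_pos (show p ≤ ((⟨r - 1, by omega⟩ : Fin n) : ℕ)
              ∧ ((⟨r - 1, by omega⟩ : Fin n) : ℕ) < r by simp only [Fin.val_mk]; omega),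
            dif_pos (show ((⟨r - 1, by omega⟩ : Fin n) : ℕ) + 1 = r
              by simp only [Fin.val_mk]; omega)]
        exact Fin.ext (by simp only [Fin.val_mk]; omega)
      · rw [hsg]; dsimp only; rw [dif_pos h1, dif_neg h2]
        rw [hsf]; dsimp only
        rw [dif_pos (show p ≤ ((⟨(j : ℕ) - 1, by omega⟩ : Fin n) : ℕ)
              ∧ ((⟨(j : ℕ) - 1, by omega⟩ : Fin n) : ℕ) < r by simp only [Fin.val_mk]; omega),
            dif_neg (show ¬(((⟨(j : ℕ) - 1, by omega⟩ : Fin n) : ℕ) + 1 = r)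
              by simp only [Fin.val_mk]; omega)]
        exact Fin.ext (by simp only [Fin.val_mk]; omega)
    · rw [hsg]; dsimp only; rw [dif_neg h1]
      rw [hsf]; dsimp only; rw [dif_neg h1]
  refine ⟨⟨sf, sg, hleft, hright⟩, ?_⟩
  intro j
  simp only [Equiv.coe_fn_mk]
  have hjlt : (j : ℕ) < n := j.isLt
  have hsflt : ((sf j : Fin n) : ℕ) < n := (sf j).isLt
  by_cases h1 : p ≤ (j : ℕ) ∧ (j : ℕ) < r
  · by_cases h2 : (j : ℕ) + 1 = r
    · have hval : ((sf j : Fin n) : ℕ) = p := by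
        rw [hsf]; dsimp only; rw [dif_pos h1, dif_pos h2]
      rw [dif_pos (show n - 1 + ((sf j : Fin n) : ℕ) < (b : ℕ) by rw [hval]; omega),
        dif_neg (show ¬(n - 1 + (j : ℕ) < (a : ℕ)) by omega)]
      have ea : (⟨n - 1 + ((sf j : Fin n) : ℕ), by omega⟩ : Fin N) = a :=
        Fin.ext (by simp only [Fin.val_mk]; rw [hval]; omega)
      have eb : (⟨n + (j : ℕ), by omega⟩ : Fin N) = b := Fin.ext (by simp only [Fin.val_mk]; omega)
      exact (congrArg z ea).trans (hz.trans (congrArg z eb).symm)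
    · have hval : ((sf j : Fin n) : ℕ) = (j : ℕ) + 1 := by
        rw [hsf]; dsimp only; rw [dif_pos h1, dif_neg h2]
      rw [dif_pos (show n - 1 + ((sf j : Fin n) : ℕ) < (b : ℕ) by rw [hval]; omega),
        dif_neg (show ¬(n - 1 + (j : ℕ) < (a : ℕ)) by omega)]
      exact congrArg z (Fin.ext (by simp only [Fin.val_mk]; rw [hval]; omega))
  · have hval : ((sf j : Fin n) : ℕ) = (j : ℕ) := by
      rw [hsf]; dsimp only; rw [dif_neg h1]
    by_cases hjp : (j : ℕ) < p
    · rw [dif_pos (show n - 1 + ((sf j : Fin n) : ℕ) < (b : ℕ) by rw [hval]; omega),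
        dif_pos (show n - 1 + (j : ℕ) < (a : ℕ) by omega)]
      exact congrArg z (Fin.ext (by simp only [Fin.val_mk]; rw [hval]))
    · rw [dif_neg (show ¬(n - 1 + ((sf j : Fin n) : ℕ) < (b : ℕ)) by rw [hval]; omega),
        dif_neg (show ¬(n - 1 + (j : ℕ) < (a : ℕ)) by omega)]
      exact congrArg z (Fin.ext (by simp only [Fin.val_mk]; rw [hval]))


lemma KK_card (n N : ℕ) (hn : 0 < n) (hN : N = 2 * n) :
    (Finset.univ.filter (fun k : Fin N => n - 1 ≤ (k : ℕ))).card = n + 1 := by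
  classical
  have h := Finset.card_filter_add_card_filter_not
    (s := (Finset.univ : Finset (Fin N))) (p := fun k : Fin N => n - 1 ≤ (k : ℕ))
  have h2 : (Finset.univ.filter (fun k : Fin N => ¬ (n - 1 ≤ (k : ℕ)))).card = n - 1 := by
    have heq : (Finset.univ.filter (fun k : Fin N => ¬ (n - 1 ≤ (k : ℕ))))
        = (Finset.univ : Finset (Fin (n - 1))).map (Fin.castLEEmb (by omega)) := by
      ext k
      simp only [Finset.mem_filter, Finset.mem_univ, true_and, Finset.mem_map, not_le]
      constructor
      · intro hk
        exact ⟨⟨(k : ℕ), hk⟩, Fin.ext rfl⟩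
      · rintro ⟨j, rfl⟩
        simpa using j.isLt
    rw [heq, Finset.card_map, Finset.card_univ, Fintype.card_fin]
  rw [Finset.card_univ, Fintype.card_fin] at h
  omega

set_option maxHeartbeats 2000000 in
/-- Spurious-pole cancellation: the rational sum defining Δ⁰ (the image of
⟨Δ^{(nn)}⟩ under f₀) is in fact given by a polynomial in z₁,…,z_N. -/
theorem stmt_12 (q : ℂ) (hq : q ≠ 0) (m n N : ℕ) (hn : 0 < n) (hN : N = 2 * n)
    (Δ : (Fin m → ℂ) → (Fin n → ℂ) → (Fin n → ℂ) → ℂ)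
    (hpoly : ∃ P : MvPolynomial (Fin m ⊕ Fin n ⊕ Fin n) ℂ,
      ∀ x w u, Δ x w u = MvPolynomial.eval (Sum.elim x (Sum.elim w u)) P)
    (hsymw : ∀ x w u (s : Equiv.Perm (Fin n)), Δ x (w ∘ s) u = Δ x w u)
    (hsymu : ∀ x w u (s : Equiv.Perm (Fin n)), Δ x w (u ∘ s) = Δ x w u) :
    ∃ Q : MvPolynomial (Fin m ⊕ Fin N) ℂ,
      ∀ (x : Fin m → ℂ) (z : Fin N → ℂ),
        (∀ i k : Fin N, n - 1 ≤ (i : ℕ) → n - 1 ≤ (k : ℕ) → i ≠ k → z i ≠ z k) →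
        (∑ k ∈ Finset.univ.filter (fun k : Fin N => n - 1 ≤ (k : ℕ)),
          ((∏ j : Fin (n - 1), (z k - z ⟨(j : ℕ), by omega⟩ * (q ^ 2)⁻¹)) /
            (∏ i ∈ Finset.univ.filter (fun i : Fin N => n - 1 ≤ (i : ℕ) ∧ i ≠ k),
              ((z i - z k) * q⁻¹)))
          * Δ x
              (fun j => if h : (j : ℕ) < n - 1 then z ⟨(j : ℕ), by omega⟩ else z k)
              (fun j => if h : n - 1 + (j : ℕ) < (k : ℕ)
                then z ⟨n - 1 + (j : ℕ), by omega⟩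
                else z ⟨n + (j : ℕ), by omega⟩))
        = MvPolynomial.eval (Sum.elim x z) Q := by
  obtain ⟨P, hP⟩ := hpoly
  classical
  set KK : Finset (Fin N) := Finset.univ.filter (fun k : Fin N => n - 1 ≤ (k : ℕ)) with hKK
  have hmemKK : ∀ k : Fin N, k ∈ KK ↔ n - 1 ≤ (k : ℕ) := by
    intro k; rw [hKK, Finset.mem_filter]; simp
  have hKKcard : KK.card = n + 1 := by rw [hKK]; exact KK_card n N hn hN
  set NP : Fin N → MvPolynomial (Fin m ⊕ Fin N) ℂ := fun k =>
    ∏ j : Fin (n - 1), (X (Sum.inr k)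
      - X (Sum.inr (⟨(j : ℕ), by omega⟩ : Fin N)) * C ((q ^ 2)⁻¹)) with hNPdef
  set DD : Fin N → MvPolynomial (Fin m ⊕ Fin N) ℂ := fun k =>
    aeval (Sum.elim (fun i => X (Sum.inl i))
      (Sum.elim
        (fun j : Fin n => if (j : ℕ) < n - 1
          then X (Sum.inr (⟨(j : ℕ), by omega⟩ : Fin N))
          else X (Sum.inr k))
        (fun j : Fin n => if n - 1 + (j : ℕ) < (k : ℕ)
          then X (Sum.inr (⟨n - 1 + (j : ℕ), by omega⟩ : Fin N))
          else X (Sum.inr (⟨n + (j : ℕ), by omega⟩ : Fin N))))) P with hDDdef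
  set PP : Fin N → MvPolynomial (Fin m ⊕ Fin N) ℂ := fun k =>
    ∏ p ∈ (pairsF KK).filter (fun p => p.1 ≠ k ∧ p.2 ≠ k),
      (X (Sum.inr p.1) - X (Sum.inr p.2)) with hPPdef
  set cc : Fin N → ℕ := fun k => (KK.filter (fun i => k < i)).card with hccdef
  set G : MvPolynomial (Fin m ⊕ Fin N) ℂ :=
    ∑ k ∈ KK, C ((-1 : ℂ) ^ cc k) * NP k * DD k * PP k with hGdef
  -- evaluation facts
  have evalNP : ∀ (v : Fin m ⊕ Fin N → ℂ) (k : Fin N), eval v (NP k)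
      = ∏ j : Fin (n - 1), (v (Sum.inr k) - v (Sum.inr (⟨(j : ℕ), by omega⟩ : Fin N)) * (q ^ 2)⁻¹) := by
    intro v k
    simp only [hNPdef]
    rw [map_prod]
    apply Finset.prod_congr rfl
    intro j _
    simp
  have evalPP : ∀ (v : Fin m ⊕ Fin N → ℂ) (k : Fin N), eval v (PP k)
      = ∏ p ∈ (pairsF KK).filter (fun p => p.1 ≠ k ∧ p.2 ≠ k),
          (v (Sum.inr p.1) - v (Sum.inr p.2)) := by
    intro v k
    simp only [hPPdef]
    rw [map_prod]
    apply Finset.prod_congr rfl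
    intro p _
    simp
  have evalDD : ∀ (v : Fin m ⊕ Fin N → ℂ) (k : Fin N), eval v (DD k)
      = Δ (fun i => v (Sum.inl i))
        (fun j : Fin n => if h : (j : ℕ) < n - 1
          then v (Sum.inr (⟨(j : ℕ), by omega⟩ : Fin N)) else v (Sum.inr k))
        (fun j : Fin n => if h : n - 1 + (j : ℕ) < (k : ℕ)
          then v (Sum.inr (⟨n - 1 + (j : ℕ), by omega⟩ : Fin N))
          else v (Sum.inr (⟨n + (j : ℕ), by omega⟩ : Fin N))) := by
    intro v k
    simp only [hDDdef]
    rw [eval_aeval', hP]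
    refine congrArg (fun g : (Fin m ⊕ Fin n ⊕ Fin n) → ℂ => eval g P) (funext fun s => ?_)
    rcases s with i | s
    · simp
    · rcases s with jj | jj
      · by_cases hj : (jj : ℕ) < n - 1
        · simp [hj]
        · simp [hj]
      · by_cases hj : n - 1 + (jj : ℕ) < (k : ℕ)
        · simp [hj]
        · simp [hj]
  have evalG : ∀ v : Fin m ⊕ Fin N → ℂ, eval v G
      = ∑ k ∈ KK, (-1 : ℂ) ^ cc k * eval v (NP k) * eval v (DD k) * eval v (PP k) := by
    intro v
    simp only [hGdef, map_sum, map_mul, eval_C]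
  -- vanishing on diagonals
  have hvanish : ∀ a b : Fin N, a ∈ KK → b ∈ KK → a < b →
      ∀ v : Fin m ⊕ Fin N → ℂ, v (Sum.inr a) = v (Sum.inr b) → eval v G = 0 := by
    intro a b haK hbK hab v hvab
    rw [evalG]
    have hbe : b ∈ KK.erase a := Finset.mem_erase.2 ⟨ne_of_gt hab, hbK⟩
    rw [← Finset.add_sum_erase _ _ haK, ← Finset.add_sum_erase _ _ hbe]
    have hzero : ∑ k ∈ (KK.erase a).erase b,
        (-1 : ℂ) ^ cc k * eval v (NP k) * eval v (DD k) * eval v (PP k) = 0 := by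
      apply Finset.sum_eq_zero
      intro k hk
      have hkb : k ≠ b := Finset.ne_of_mem_erase hk
      have hk' := Finset.mem_of_mem_erase hk
      have hka : k ≠ a := Finset.ne_of_mem_erase hk'
      rw [evalPP]
      have hmem : (a, b) ∈ (pairsF KK).filter (fun p => p.1 ≠ k ∧ p.2 ≠ k) :=
        Finset.mem_filter.2 ⟨mem_pairsF.2 ⟨haK, hbK, hab⟩, Ne.symm hka, Ne.symm hkb⟩
      rw [Finset.prod_eq_zero hmem (by rw [sub_eq_zero]; exact hvab), mul_zero]
    rw [hzero, add_zero]
    have hNPab : eval v (NP a) = eval v (NP b) := by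
      rw [evalNP, evalNP]
      apply Finset.prod_congr rfl
      intro j _
      rw [hvab]
    have hDDab : eval v (DD a) = eval v (DD b) := by
      rw [evalDD, evalDD]
      have hanat : (a : ℕ) < (b : ℕ) := hab
      obtain ⟨s, hs⟩ := cycle_exists n N hn hN (fun i => v (Sum.inr i)) a b
        ((hmemKK a).1 haK) hanat hvab
      have hww : (fun j : Fin n => if h : (j : ℕ) < n - 1
            then v (Sum.inr (⟨(j : ℕ), by omega⟩ : Fin N)) else v (Sum.inr a))
          = (fun j : Fin n => if h : (j : ℕ) < n - 1
            then v (Sum.inr (⟨(j : ℕ), by omega⟩ : Fin N)) else v (Sum.inr b)) := by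
        funext j
        by_cases hj : (j : ℕ) < n - 1
        · rw [dif_pos hj, dif_pos hj]
        · rw [dif_neg hj, dif_neg hj]
          exact hvab
      rw [hww]
      have huu : ((fun j : Fin n => if h : n - 1 + (j : ℕ) < (b : ℕ)
            then v (Sum.inr (⟨n - 1 + (j : ℕ), by omega⟩ : Fin N))
            else v (Sum.inr (⟨n + (j : ℕ), by omega⟩ : Fin N))) ∘ s)
          = (fun j : Fin n => if h : n - 1 + (j : ℕ) < (a : ℕ)
            then v (Sum.inr (⟨n - 1 + (j : ℕ), by omega⟩ : Fin N))
            else v (Sum.inr (⟨n + (j : ℕ), by omega⟩ : Fin N))) := funext fun j => hs j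
      rw [← huu]
      exact hsymu _ _ _ s
    have hpa : eval v (PP a) = ∏ p ∈ (pairsF KK).filter (fun p => p.1 ≠ a ∧ p.2 ≠ a),
        ((fun i => v (Sum.inr i)) p.1 - (fun i => v (Sum.inr i)) p.2) := evalPP v a
    have hpb : eval v (PP b) = ∏ p ∈ (pairsF KK).filter (fun p => p.1 ≠ b ∧ p.2 ≠ b),
        ((fun i => v (Sum.inr i)) p.1 - (fun i => v (Sum.inr i)) p.2) := evalPP v b
    have hflip := flip_lemma KK (fun i => v (Sum.inr i)) a b haK hbK hab hvab
    rw [hNPab, hDDab, hpa, hpb]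
    simp only [hccdef]
    linear_combination (eval v (NP b) * eval v (DD b)) * hflip
  -- divisibility
  set SP : Finset ((Fin m ⊕ Fin N) × (Fin m ⊕ Fin N)) :=
    (pairsF KK).image (fun p => (Sum.inr p.1, Sum.inr p.2)) with hSP
  have hSPmem : ∀ pr ∈ SP, ∃ p ∈ pairsF KK, pr = (Sum.inr p.1, Sum.inr p.2) := by
    intro pr h
    obtain ⟨p, hp, he⟩ := Finset.mem_image.1 h
    exact ⟨p, hp, he.symm⟩
  have hdvd : (∏ pr ∈ SP, (X pr.1 - X pr.2 : MvPolynomial (Fin m ⊕ Fin N) ℂ)) ∣ G := by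
    apply div_many
    · intro pr hpr
      obtain ⟨p, hp, rfl⟩ := hSPmem pr hpr
      obtain ⟨_, _, hlt⟩ := mem_pairsF.1 hp
      intro hcon
      exact absurd (Sum.inr_injective hcon) (ne_of_lt hlt)
    · intro pr hpr pr' hpr' hne'
      obtain ⟨p, hp, rfl⟩ := hSPmem pr hpr
      obtain ⟨p', hp', rfl⟩ := hSPmem pr' hpr'
      obtain ⟨h1K, h2K, hlt⟩ := mem_pairsF.1 hp
      obtain ⟨h1K', h2K', hlt'⟩ := mem_pairsF.1 hp'
      constructor
      · intro he hcon
        exact hne' (Prod.ext he hcon)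
      · intro he hcon
        have h1 : p.2 = p'.1 := Sum.inr_injective he
        have h2 : p.1 = p'.2 := Sum.inr_injective hcon
        have hx1 : p.1 < p'.1 := h1 ▸ hlt
        have hx2 : p'.1 < p.1 := h2.symm ▸ hlt'
        exact absurd (lt_trans hx1 hx2) (lt_irrefl p.1)
    · intro pr hpr v hv
      obtain ⟨p, hp, rfl⟩ := hSPmem pr hpr
      obtain ⟨h1K, h2K, hlt⟩ := mem_pairsF.1 hp
      exact hvanish p.1 p.2 h1K h2K hlt v hv
  have hprodeq : (∏ pr ∈ SP, (X pr.1 - X pr.2 : MvPolynomial (Fin m ⊕ Fin N) ℂ))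
      = ∏ p ∈ pairsF KK, (X (Sum.inr p.1) - X (Sum.inr p.2) : MvPolynomial (Fin m ⊕ Fin N) ℂ) := by
    rw [hSP]
    rw [Finset.prod_image]
    intro p _ p' _ he
    have h1 : Sum.inr p.1 = Sum.inr p'.1 := congrArg Prod.fst he
    have h2 : Sum.inr p.2 = Sum.inr p'.2 := congrArg Prod.snd he
    exact Prod.ext (Sum.inr_injective h1) (Sum.inr_injective h2)
  rw [hprodeq] at hdvd
  obtain ⟨Q0, hQ0⟩ := hdvd
  refine ⟨C (q ^ n) * Q0, ?_⟩
  intro x z hz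
  set v : Fin m ⊕ Fin N → ℂ := Sum.elim x z with hv
  have hVne : (∏ p ∈ pairsF KK, (z p.1 - z p.2)) ≠ 0 := by
    rw [Finset.prod_ne_zero_iff]
    intro p hp
    obtain ⟨h1K, h2K, hlt⟩ := mem_pairsF.1 hp
    exact sub_ne_zero_of_ne (hz p.1 p.2 ((hmemKK _).1 h1K) ((hmemKK _).1 h2K) (ne_of_lt hlt))
  have hevalVQ : eval v G = (∏ p ∈ pairsF KK, (z p.1 - z p.2)) * eval v Q0 := by
    rw [hQ0, map_mul, map_prod]
    congr 1
    apply Finset.prod_congr rfl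
    intro p _
    simp [hv]
  have hfil : ∀ k : Fin N, (Finset.univ.filter (fun i : Fin N => n - 1 ≤ (i : ℕ) ∧ i ≠ k))
      = KK.erase k := by
    intro k
    ext i
    simp only [Finset.mem_filter, Finset.mem_univ, true_and, Finset.mem_erase, hKK]
    exact and_comm
  have hcardE : ∀ k ∈ KK, (KK.erase k).card = n := by
    intro k hk
    rw [Finset.card_erase_of_mem hk, hKKcard]
    omega
  rw [map_mul, eval_C]
  have hQ0v : eval v Q0 = eval v G / (∏ p ∈ pairsF KK, (z p.1 - z p.2)) := by
    rw [hevalVQ, mul_div_cancel_left₀ _ hVne]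
  rw [hQ0v]
  rw [← mul_div_assoc, eq_div_iff hVne]
  rw [evalG, Finset.sum_mul, Finset.mul_sum]
  apply Finset.sum_congr rfl
  intro k hk
  have hkK : n - 1 ≤ (k : ℕ) := (hmemKK k).1 hk
  have hNPk : eval v (NP k) = ∏ j : Fin (n - 1), (z k - z ⟨(j : ℕ), by omega⟩ * (q ^ 2)⁻¹) := by
    rw [evalNP]
    apply Finset.prod_congr rfl
    intro j _
    simp [hv]
  have hDDk : eval v (DD k)
      = Δ x (fun j => if h : (j : ℕ) < n - 1 then z ⟨(j : ℕ), by omega⟩ else z k)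
          (fun j => if h : n - 1 + (j : ℕ) < (k : ℕ) then z ⟨n - 1 + (j : ℕ), by omega⟩
            else z ⟨n + (j : ℕ), by omega⟩) := by
    rw [evalDD]
    simp only [hv, Sum.elim_inl, Sum.elim_inr]
  have hPPk : eval v (PP k)
      = ∏ p ∈ (pairsF KK).filter (fun p => p.1 ≠ k ∧ p.2 ≠ k), (z p.1 - z p.2) := by
    rw [evalPP]
    apply Finset.prod_congr rfl
    intro p _
    simp [hv]
  have hden : (∏ i ∈ Finset.univ.filter (fun i : Fin N => n - 1 ≤ (i : ℕ) ∧ i ≠ k),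
        ((z i - z k) * q⁻¹))
      = (∏ i ∈ KK.erase k, (z i - z k)) * (q⁻¹) ^ n := by
    rw [hfil k, Finset.prod_mul_distrib, Finset.prod_const, hcardE k hk]
  have hDk : (∏ i ∈ KK.erase k, (z i - z k)) ≠ 0 := by
    rw [Finset.prod_ne_zero_iff]
    intro i hi
    exact sub_ne_zero_of_ne
      (hz i k ((hmemKK i).1 (Finset.mem_of_mem_erase hi)) hkK (Finset.ne_of_mem_erase hi))
  have hsplit := vand_split KK z k hk
  rw [← hNPk, ← hDDk, hden, hsplit, ← hPPk]
  simp only [hccdef]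
  have hqn : (q : ℂ) ^ n ≠ 0 := pow_ne_zero _ hq
  field_simp
  have hinv : (1 / q) ^ n * q ^ n = 1 := by rw [one_div, inv_pow, inv_mul_cancel₀ hqn]
  linear_combination (-(eval v (NP k) * eval v (DD k) * eval v (PP k))) * hinv
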